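/- Let X_1, ..., X_n, X_{n+1} be i.i.d. random elements of a measurable space Ω, let n_1 < n, and let g: Ω → ℝ be a measurable function that depends only on X_1, ..., X_{n_1}. Set σ_i = g(X_{n_1+i}) for i = 1, ..., n_2 where n_2 = n - n_1, let σ_{(1)} ≤ ... ≤ σ_{(n_2)} be their order statistics, and define C_n = {x ∈ Ω : g(x) ≥ σ_{(⌈(n_2+1)α⌉ - 1)}} (assuming ⌈(n_2+1)α⌉ - 1 ≥ 1). Then P(X_{n+1} ∈ C_n) ≥ 1 - α. -/

import Mathlib

open MeasureTheory Finset
open scoped ENNReal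

lemma aux_count {N m : ℕ} (Y : Fin N → ℝ) :
    (Finset.univ.filter fun k => (Finset.univ.filter fun i => Y i ≤ Y k).card ≤ m).card ≤ m := by
  set T := Finset.univ.filter fun k => (Finset.univ.filter fun i => Y i ≤ Y k).card ≤ m with hT
  rcases T.eq_empty_or_nonempty with h | h
  · simp [h]
  · obtain ⟨k, hk, hkmax⟩ := T.exists_max_image Y h
    have hsub : T ⊆ Finset.univ.filter fun i => Y i ≤ Y k := by
      intro j hj
      simp only [Finset.mem_filter, Finset.mem_univ, true_and]
      exact hkmax j hj
    have := Finset.card_le_card hsub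
    have hk' : (Finset.univ.filter fun i => Y i ≤ Y k).card ≤ m := by
      simpa [hT] using hk
    omega

lemma aux_sort {N : ℕ} (f : Fin N → ℝ) (a : ℝ) (j : Fin N)
    (h : (j : ℕ) < (Finset.univ.filter fun i => f i ≤ a).card) :
    f (Tuple.sort f j) ≤ a := by
  have hmono := Tuple.monotone_sort f
  have hcard : Fintype.card {i // (f ∘ Tuple.sort f) i ≤ a} =
      (Finset.univ.filter fun i => f i ≤ a).card := by
    rw [show (Finset.univ.filter fun i => f i ≤ a).card = Fintype.card {i // f i ≤ a} from
      (Fintype.card_subtype _).symm]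
    exact Fintype.card_congr ((Tuple.sort f).subtypeEquiv (fun i => Iff.rfl))
  have := (Tuple.lt_card_le_iff_apply_le_of_monotone (f := f ∘ Tuple.sort f) (a := a) (j := j) hmono).mp
    (by rw [← Fintype.card_subtype, hcard]; exact_mod_cast h)
  exact this

lemma aux_map_pi {Ω S : Type*} [MeasurableSpace Ω] [MeasurableSpace S]
    (μ : Measure Ω) [IsProbabilityMeasure μ] {N : ℕ}
    (X : Fin N → Ω → S) (hmeas : ∀ i, Measurable (X i))
    (ν : Measure S) [IsProbabilityMeasure ν] (hident : ∀ i, Measure.map (X i) μ = ν)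
    (hindep : ProbabilityTheory.iIndepFun X μ) :
    Measure.map (fun ω i => X i ω) μ = Measure.pi (fun _ => ν) := by
  symm
  apply Measure.pi_eq
  intro s hs
  rw [Measure.map_apply (measurable_pi_lambda _ hmeas) (MeasurableSet.univ_pi hs)]
  have hpre : (fun ω i => X i ω) ⁻¹' Set.pi Set.univ s = ⋂ i ∈ Finset.univ, X i ⁻¹' s i := by
    ext ω; simp [Set.mem_pi]
  rw [hpre, hindep.measure_inter_preimage_eq_mul Finset.univ (fun i _ => hs i)]
  refine Finset.prod_congr rfl fun i _ => ?_
  rw [← hident i, Measure.map_apply (hmeas i) (hs i)]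

lemma aux_map_perm {ι : Type*} [Fintype ι] {S : Type*} [MeasurableSpace S]
    (ν : Measure S) [IsProbabilityMeasure ν] (e : Equiv.Perm ι) :
    Measure.map (fun x : ι → S => x ∘ e) (Measure.pi fun _ => ν) = Measure.pi fun _ => ν := by
  symm
  apply Measure.pi_eq
  intro s hs
  have hmeas : Measurable (fun x : ι → S => x ∘ e) :=
    measurable_pi_lambda _ fun i => measurable_pi_apply (e i)
  rw [Measure.map_apply hmeas (MeasurableSet.univ_pi hs)]
  have hpre : (fun x : ι → S => x ∘ e) ⁻¹' Set.pi Set.univ s =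
      Set.pi Set.univ (fun j => s (e.symm j)) := by
    ext x
    simp only [Set.mem_preimage, Set.mem_pi, Set.mem_univ, true_implies, Function.comp_apply]
    constructor
    · intro h j; simpa using h (e.symm j)
    · intro h i; have := h (e i); rwa [Equiv.symm_apply_apply] at this
  rw [hpre, Measure.pi_pi]
  exact Fintype.prod_equiv e.symm _ _ fun j => rfl

theorem stmt3 {Ω S : Type*} [MeasurableSpace Ω] [MeasurableSpace S]
    (μ : Measure Ω) [IsProbabilityMeasure μ]
    (n n₁ : ℕ) (hn₁ : n₁ < n)
    (X : Fin (n + 1) → Ω → S) (hmeas : ∀ i, Measurable (X i))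
    (ν : Measure S) (hident : ∀ i, Measure.map (X i) μ = ν)
    (hindep : ProbabilityTheory.iIndepFun X μ)
    (G : (Fin n₁ → S) → S → ℝ)
    (hG : Measurable fun q : (Fin n₁ → S) × S => G q.1 q.2)
    (α : ℝ) (hα : α ∈ Set.Ioo (0 : ℝ) 1)
    (n₂ : ℕ) (hn₂ : n₂ = n - n₁)
    (m : ℕ) (hm : m = ⌈((n₂ : ℝ) + 1) * α⌉₊ - 1) (hm1 : 1 ≤ m) (hmn : m ≤ n₂) :
    ENNReal.ofReal (1 - α) ≤
      μ {ω | (fun i : Fin n₂ =>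
            G (fun j : Fin n₁ => X ⟨j, by omega⟩ ω) (X ⟨n₁ + i, by omega⟩ ω))
          (Tuple.sort (fun i : Fin n₂ =>
            G (fun j : Fin n₁ => X ⟨j, by omega⟩ ω) (X ⟨n₁ + i, by omega⟩ ω)) ⟨m - 1, by omega⟩)
          ≤ G (fun j : Fin n₁ => X ⟨j, by omega⟩ ω) (X (Fin.last n) ω)} := by
  classical
  obtain ⟨hα0, hα1⟩ := hα
  haveI hνprob : IsProbabilityMeasure ν := by
    rw [← hident 0]; exact Measure.isProbabilityMeasure_map (hmeas 0).aemeasurable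
  have hnn : n₁ + n₂ = n := by omega
  set π : Measure (Fin (n + 1) → S) := Measure.pi fun _ => ν with hπdef
  -- coordinates of the calibration + test points
  set c : Fin (n₂ + 1) → Fin (n + 1) := fun k =>
    if h : (k : ℕ) < n₂ then ⟨n₁ + k, by omega⟩ else Fin.last n with hcdef
  set tr : (Fin (n + 1) → S) → (Fin n₁ → S) := fun x j => x ⟨j, by omega⟩ with htrdef
  set Z : Fin (n₂ + 1) → (Fin (n + 1) → S) → ℝ := fun k x => G (tr x) (x (c k)) with hZdef
  set B : Fin (n₂ + 1) → Set (Fin (n + 1) → S) := fun k =>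
    {x | (Finset.univ.filter fun i => Z i x ≤ Z k x).card ≤ m} with hBdef
  have hcval : ∀ k : Fin (n₂ + 1), n₁ ≤ (c k : ℕ) := by
    intro k
    simp only [hcdef]
    split_ifs <;> simp [Fin.last] <;> omega
  have hcinj : Function.Injective c := by
    intro a b hab
    have ha := a.isLt
    have hb := b.isLt
    have hval := congrArg Fin.val hab
    simp only [hcdef] at hval
    apply Fin.ext
    split_ifs at hval <;> simp [Fin.last] at hval <;> omega
  have hclast : c (Fin.last n₂) = Fin.last n := by
    simp [hcdef]
  -- measurability
  have hZm : ∀ k, Measurable (Z k) := by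
    intro k
    have : Z k = (fun q : (Fin n₁ → S) × S => G q.1 q.2) ∘ (fun x => (tr x, x (c k))) := rfl
    rw [this]
    exact hG.comp ((measurable_pi_lambda _ fun j => measurable_pi_apply _).prodMk
      (measurable_pi_apply _))
  have hcardm : ∀ k, Measurable fun x => ((Finset.univ.filter fun i => Z i x ≤ Z k x).card : ℕ) := by
    intro k
    simp only [Finset.card_filter]
    exact Finset.measurable_sum _ fun i _ =>
      Measurable.ite (measurableSet_le (hZm i) (hZm k)) measurable_const measurable_const
  have hB : ∀ k, MeasurableSet (B k) := by
    intro k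
    have : B k = (fun x => ((Finset.univ.filter fun i => Z i x ≤ Z k x).card : ℕ)) ⁻¹'
        Set.Iic m := rfl
    rw [this]
    exact hcardm k (by trivial)
  -- exchangeability: all B k have the same π-measure
  have hBk : ∀ k, π (B k) = π (B (Fin.last n₂)) := by
    intro k
    set e : Equiv.Perm (Fin (n + 1)) := Equiv.swap (c k) (c (Fin.last n₂)) with hedef
    have hec : ∀ i, e (c i) = c (Equiv.swap k (Fin.last n₂) i) := by
      intro i
      rcases eq_or_ne i k with rfl | hik
      · simp [hedef, Equiv.swap_apply_left]
      rcases eq_or_ne i (Fin.last n₂) with rfl | hil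
      · simp [hedef, Equiv.swap_apply_right]
      · rw [hedef]
        rw [Equiv.swap_apply_of_ne_of_ne (fun h => hik (hcinj h)) (fun h => hil (hcinj h)),
          Equiv.swap_apply_of_ne_of_ne hik hil]
    have htr : ∀ x : Fin (n + 1) → S, tr (x ∘ e) = tr x := by
      intro x
      funext j
      show x (e ⟨(j : ℕ), _⟩) = x ⟨(j : ℕ), _⟩
      congr 1
      rw [hedef]
      refine Equiv.swap_apply_of_ne_of_ne ?_ ?_
      · refine Fin.ne_of_val_ne ?_
        have h1 := hcval k
        have h2 := j.isLt
        simp only [Fin.val_mk]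
        omega
      · refine Fin.ne_of_val_ne ?_
        have h1 := hcval (Fin.last n₂)
        have h2 := j.isLt
        simp only [Fin.val_mk]
        omega
    have hZsw : ∀ (x : Fin (n + 1) → S) (i : Fin (n₂ + 1)),
        Z i (x ∘ e) = Z (Equiv.swap k (Fin.last n₂) i) x := by
      intro x i
      show G (tr (x ∘ e)) ((x ∘ e) (c i)) = G (tr x) (x (c (Equiv.swap k (Fin.last n₂) i)))
      rw [htr x]
      congr 1
      show x (e (c i)) = _
      rw [hec i]
    have hmem : ∀ x : Fin (n + 1) → S, x ∘ e ∈ B (Fin.last n₂) ↔ x ∈ B k := by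
      intro x
      simp only [hBdef, Set.mem_setOf_eq]
      have h1 : ∀ i, (Z i (x ∘ e) ≤ Z (Fin.last n₂) (x ∘ e)) ↔
          (Z (Equiv.swap k (Fin.last n₂) i) x ≤ Z k x) := by
        intro i
        rw [hZsw, hZsw, Equiv.swap_apply_right]
      have h2 : (Finset.univ.filter fun i => Z i (x ∘ e) ≤ Z (Fin.last n₂) (x ∘ e)).card =
          (Finset.univ.filter fun i => Z i x ≤ Z k x).card := by
        rw [Finset.filter_congr (fun i _ => by rw [h1 i])]
        simp only [Finset.card_filter]
        exact Fintype.sum_equiv (Equiv.swap k (Fin.last n₂)) _ _ fun i => rfl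
      rw [h2]
    have hBe : B k = (fun x => x ∘ e) ⁻¹' B (Fin.last n₂) := by
      ext x
      exact (hmem x).symm
    have hem : Measurable (fun x : Fin (n + 1) → S => x ∘ e) :=
      measurable_pi_lambda _ fun i => measurable_pi_apply (e i)
    rw [hBe, ← Measure.map_apply hem (hB (Fin.last n₂)), hπdef, aux_map_perm]
  -- sum of measures bounded by m
  have hsum : ((n₂ : ℝ≥0∞) + 1) * π (B (Fin.last n₂)) ≤ (m : ℝ≥0∞) := by
    have hpt : ∀ x, (∑ k : Fin (n₂ + 1), (B k).indicator (1 : (Fin (n + 1) → S) → ℝ≥0∞) x)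
        ≤ (m : ℝ≥0∞) := by
      intro x
      have hcount := aux_count (N := n₂ + 1) (m := m) (fun i => Z i x)
      have : (∑ k : Fin (n₂ + 1), (B k).indicator (1 : (Fin (n + 1) → S) → ℝ≥0∞) x) =
          ((Finset.univ.filter fun k : Fin (n₂ + 1) => x ∈ B k).card : ℝ≥0∞) := by
        rw [Finset.card_filter]
        push_cast
        refine Finset.sum_congr rfl fun k _ => ?_
        by_cases h : x ∈ B k <;> simp [Set.indicator, h]
      rw [this]
      have heq : (Finset.univ.filter fun k : Fin (n₂ + 1) => x ∈ B k) =
          (Finset.univ.filter fun k => (Finset.univ.filter fun i => Z i x ≤ Z k x).card ≤ m) := by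
        apply Finset.filter_congr
        intro k _
        simp [hBdef, Set.mem_setOf_eq]
      rw [heq]
      exact_mod_cast hcount
    have h1 : (∑ k : Fin (n₂ + 1), π (B k)) ≤ (m : ℝ≥0∞) := by
      have heq : (∑ k : Fin (n₂ + 1), π (B k)) =
          ∫⁻ x, ∑ k : Fin (n₂ + 1), (B k).indicator (1 : (Fin (n + 1) → S) → ℝ≥0∞) x ∂π := by
        rw [lintegral_finset_sum _ fun k _ => measurable_one.indicator (hB k)]
        refine Finset.sum_congr rfl fun k _ => ?_
        rw [lintegral_indicator_one (hB k)]
      rw [heq]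
      calc ∫⁻ x, ∑ k : Fin (n₂ + 1), (B k).indicator (1 : (Fin (n + 1) → S) → ℝ≥0∞) x ∂π
          ≤ ∫⁻ _, (m : ℝ≥0∞) ∂π := lintegral_mono hpt
        _ = (m : ℝ≥0∞) := by simp
    calc ((n₂ : ℝ≥0∞) + 1) * π (B (Fin.last n₂))
        = ∑ k : Fin (n₂ + 1), π (B (Fin.last n₂)) := by
          rw [Finset.sum_const, Finset.card_univ, Fintype.card_fin, nsmul_eq_mul]
          push_cast
          ring
      _ = ∑ k : Fin (n₂ + 1), π (B k) := (Finset.sum_congr rfl fun k _ => (hBk k).symm)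
      _ ≤ (m : ℝ≥0∞) := h1
  -- deduce π (B last) ≤ α
  have hπα : π (B (Fin.last n₂)) ≤ ENNReal.ofReal α := by
    have hceil : 2 ≤ ⌈((n₂ : ℝ) + 1) * α⌉₊ := by omega
    have hmlt : (m : ℝ) ≤ ((n₂ : ℝ) + 1) * α := by
      have h1 : (⌈((n₂ : ℝ) + 1) * α⌉₊ : ℝ) < ((n₂ : ℝ) + 1) * α + 1 :=
        Nat.ceil_lt_add_one (by positivity)
      have h2 : (m : ℝ) = (⌈((n₂ : ℝ) + 1) * α⌉₊ : ℝ) - 1 := by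
        rw [hm]
        push_cast [Nat.cast_sub (by omega : 1 ≤ ⌈((n₂ : ℝ) + 1) * α⌉₊)]
        ring
      linarith
    have key : ((n₂ : ℝ≥0∞) + 1) * π (B (Fin.last n₂)) ≤
        ((n₂ : ℝ≥0∞) + 1) * ENNReal.ofReal α := by
      refine hsum.trans ?_
      calc (m : ℝ≥0∞) = ENNReal.ofReal (m : ℝ) := by rw [ENNReal.ofReal_natCast]
        _ ≤ ENNReal.ofReal (((n₂ : ℝ) + 1) * α) := ENNReal.ofReal_le_ofReal hmlt
        _ = ENNReal.ofReal ((n₂ : ℝ) + 1) * ENNReal.ofReal α := ENNReal.ofReal_mul (by positivity)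
        _ = ((n₂ : ℝ≥0∞) + 1) * ENNReal.ofReal α := by
            congr 1
            rw [show ((n₂ : ℝ) + 1) = ((n₂ + 1 : ℕ) : ℝ) by push_cast; ring,
              ENNReal.ofReal_natCast]
            push_cast
            ring
    have hne0 : ((n₂ : ℝ≥0∞) + 1) ≠ 0 := by simp
    have hnetop : ((n₂ : ℝ≥0∞) + 1) ≠ ⊤ := by
      simp [ENNReal.add_ne_top]
    exact (ENNReal.mul_le_mul_iff_right hne0 hnetop).mp key
  -- transfer to μ and conclude
  have hXmeas : Measurable (fun ω i => X i ω) := measurable_pi_lambda _ hmeas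
  have hmap : Measure.map (fun ω i => X i ω) μ = π :=
    aux_map_pi μ X hmeas ν hident hindep
  set E : Set Ω := {ω | (fun i : Fin n₂ =>
        G (fun j : Fin n₁ => X ⟨j, by omega⟩ ω) (X ⟨n₁ + i, by omega⟩ ω))
      (Tuple.sort (fun i : Fin n₂ =>
        G (fun j : Fin n₁ => X ⟨j, by omega⟩ ω) (X ⟨n₁ + i, by omega⟩ ω)) ⟨m - 1, by omega⟩)
      ≤ G (fun j : Fin n₁ => X ⟨j, by omega⟩ ω) (X (Fin.last n) ω)} with hEdef
  have hcompl : Eᶜ ⊆ (fun ω i => X i ω) ⁻¹' B (Fin.last n₂) := by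
    intro ω hω
    simp only [hEdef, Set.mem_compl_iff, Set.mem_setOf_eq, not_le] at hω
    show (fun i => X i ω) ∈ B (Fin.last n₂)
    by_contra hmem
    simp only [hBdef, Set.mem_setOf_eq, not_le] at hmem
    set f : Fin n₂ → ℝ := fun i =>
      G (fun j : Fin n₁ => X ⟨j, by omega⟩ ω) (X ⟨n₁ + i, by omega⟩ ω) with hfdef
    set t : ℝ := G (fun j : Fin n₁ => X ⟨j, by omega⟩ ω) (X (Fin.last n) ω) with htdef
    have hZlast : Z (Fin.last n₂) (fun i => X i ω) = t := by
      show G (tr fun i => X i ω) ((fun i => X i ω) (c (Fin.last n₂))) = t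
      rw [hclast]
    have hZcast : ∀ i : Fin n₂, Z i.castSucc (fun i => X i ω) = f i := by
      intro i
      show G (tr fun i => X i ω) ((fun i => X i ω) (c i.castSucc)) = f i
      have : c i.castSucc = ⟨n₁ + (i : ℕ), by omega⟩ := by
        simp only [hcdef]
        rw [dif_pos (by simpa using i.isLt)]
        rfl
      rw [this]
    have hsplit : (Finset.univ.filter fun i : Fin (n₂ + 1) =>
        Z i (fun i => X i ω) ≤ Z (Fin.last n₂) (fun i => X i ω)).card =
        (Finset.univ.filter fun i : Fin n₂ => f i ≤ t).card + 1 := by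
      rw [Finset.card_filter, Finset.card_filter, Fin.sum_univ_castSucc]
      have hlast : Z (Fin.last n₂) (fun i => X i ω) ≤ Z (Fin.last n₂) (fun i => X i ω) := le_refl _
      rw [if_pos hlast]
      congr 1
      refine Finset.sum_congr rfl fun i _ => ?_
      rw [hZcast i, hZlast]
    have hcard : m ≤ (Finset.univ.filter fun i : Fin n₂ => f i ≤ t).card := by omega
    have := aux_sort f t ⟨m - 1, by omega⟩ (by simpa using lt_of_lt_of_le (by omega) hcard)
    exact absurd this (not_le.mpr hω)
  have hEc : μ Eᶜ ≤ ENNReal.ofReal α := by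
    calc μ Eᶜ ≤ μ ((fun ω i => X i ω) ⁻¹' B (Fin.last n₂)) := measure_mono hcompl
      _ = π (B (Fin.last n₂)) := by rw [← hmap, Measure.map_apply hXmeas (hB (Fin.last n₂))]
      _ ≤ ENNReal.ofReal α := hπα
  calc ENNReal.ofReal (1 - α) = 1 - ENNReal.ofReal α := by
        rw [ENNReal.ofReal_sub _ hα0.le, ENNReal.ofReal_one]
    _ ≤ μ E := by
        rw [tsub_le_iff_right]
        calc (1 : ℝ≥0∞) = μ Set.univ := measure_univ.symm
          _ = μ (E ∪ Eᶜ) := by rw [Set.union_compl_self]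
          _ ≤ μ E + μ Eᶜ := measure_union_le _ _
          _ ≤ μ E + ENNReal.ofReal α := add_le_add_right hEc _
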